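/- arXiv:0805.2915 — 4 statements merged into one kernel-verified Lean document; each statement's English description precedes it below -/
import Mathlib

section
/- Let b : Q∨ × Q∨ → ℤ be a W-invariant symmetric even ℤ-bilinear form (i.e. b ∈ NS(R)). Then the unique ℚ-bilinear extension of b to V × V takes integer values on P∨ × Q∨ and on Q∨ × P∨; equivalently, for every x ∈ P∨ and every λ ∈ Q∨ one has b(x, λ) ∈ ℤ. (This is the paper's Lemma stating that every element of NS(M_G), for G simply connected, is integral on Λ_{T_{G^ad}} ⊗ Λ_{T_G} and on Λ_{T_G} ⊗ Λ_{T_{G^ad}}.) -/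
/-- **Integrality of Néron–Severi forms on the coweight lattice.**
Let `R` be a reduced crystallographic root system spanning a finite-dimensional
`ℚ`-vector space `V` (roots realised as linear forms `root i : V →ₗ[ℚ] ℚ`,
coroots as vectors `coroot i : V`), with Weyl group `W` generated by the
reflections.  Let `Q` be the coroot lattice.  If `b` is (the `ℚ`-bilinear
extension of) a `W`-invariant symmetric even `ℤ`-bilinear form on `Q`, then
`b` takes integer values on `P∨ × Q` and on `Q × P∨`, where
`P∨ = {x : V | ∀ i, root i x ∈ ℤ}` is the coweight lattice. -/
theorem ns_form_integral_on_coweights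
    (V : Type*) [AddCommGroup V] [Module ℚ V] [FiniteDimensional ℚ V]
    (ι : Type*) [Fintype ι]
    (root : ι → (V →ₗ[ℚ] ℚ)) (coroot : ι → V)
    (hpair : ∀ i, root i (coroot i) = 2)
    (hcrys : ∀ i j, ∃ n : ℤ, root i (coroot j) = (n : ℚ))
    (hreduced : ∀ i j, (∃ c : ℚ, root j = c • root i) →
      root j = root i ∨ root j = -root i)
    (hrefl_co : ∀ i j, ∃ k, Module.reflection (hpair i) (coroot j) = coroot k)
    (hrefl_root : ∀ i j, ∃ k, ∀ x : V,
      root j (Module.reflection (hpair i) x) = root k x)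
    (hspan : Submodule.span ℚ (Set.range coroot) = ⊤)
    (W : Subgroup (V ≃ₗ[ℚ] V))
    (hW : W = Subgroup.closure (Set.range fun i => Module.reflection (hpair i)))
    (Q : AddSubgroup V)
    (hQ : Q = AddSubgroup.closure (Set.range coroot))
    (b : V →ₗ[ℚ] V →ₗ[ℚ] ℚ)
    (hsymm : ∀ x y : V, b x y = b y x)
    (hWinv : ∀ w ∈ W, ∀ x y : V, b (w x) (w y) = b x y)
    (hint : ∀ x ∈ Q, ∀ y ∈ Q, ∃ n : ℤ, b x y = (n : ℚ))
    (heven : ∀ x ∈ Q, ∃ n : ℤ, b x x = 2 * (n : ℚ)) :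
    ∀ x : V, (∀ i, ∃ n : ℤ, root i x = (n : ℚ)) →
      ∀ l ∈ Q, (∃ n : ℤ, b x l = (n : ℚ)) ∧ (∃ n : ℤ, b l x = (n : ℚ)) := by
  intro x hx l hl
  have hQsub : ∀ i, coroot i ∈ Q := fun i => by
    rw [hQ]; exact AddSubgroup.subset_closure ⟨i, rfl⟩
  have key : ∀ j, ∃ n : ℤ, b x (coroot j) = (n : ℚ) := by
    intro j
    obtain ⟨m, hm⟩ := hx j
    obtain ⟨n, hn⟩ := heven (coroot j) (hQsub j)
    refine ⟨m * n, ?_⟩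
    have hs : (Module.reflection (hpair j) : V ≃ₗ[ℚ] V) ∈ W := by
      rw [hW]; exact Subgroup.subset_closure ⟨j, rfl⟩
    have h1 := hWinv _ hs x (coroot j)
    rw [Module.reflection_apply_self, Module.reflection_apply] at h1
    simp only [map_sub, map_smul, map_neg, LinearMap.sub_apply, LinearMap.smul_apply,
      LinearMap.neg_apply, smul_eq_mul] at h1
    rw [hm, hn] at h1
    push_cast
    nlinarith [h1]
  have main : ∃ n : ℤ, b x l = (n : ℚ) := by
    rw [hQ] at hl
    induction hl using AddSubgroup.closure_induction with
    | mem y hy => obtain ⟨j, rfl⟩ := hy; exact key j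
    | zero => exact ⟨0, by simp⟩
    | add y z hy hz ihy ihz =>
        obtain ⟨a, ha⟩ := ihy; obtain ⟨c, hc⟩ := ihz
        exact ⟨a + c, by push_cast; simp [ha, hc]⟩
    | neg y hy ihy =>
        obtain ⟨a, ha⟩ := ihy
        exact ⟨-a, by push_cast; simp [ha]⟩
  exact ⟨main, main.imp fun n hn => by rw [hsymm]; exact hn⟩
end

section
/- Every coset c ∈ P∨/Q∨ admits a representative δ ∈ P∨ with the following property: the group homomorphism from NS(R) to Hom(Q∨, ℤ) sending a form b to the linear form λ ↦ b(δ, λ) (where b also denotes the ℚ-bilinear extension of b to V, which takes integer values on P∨ × Q∨) is injective. (This is the combinatorial content of the paper's Lemma that every coset d ∈ Λ_{T_{G^ad}}/Λ_{T_G} = π₁(G^ad) admits a lift δ such that the map (ι_G)^{NS,δ} : NS(M_G) → NS(M_{T_G}) is injective.) -/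
/-- `b` is (the `ℚ`-bilinear extension of) a `W`-invariant symmetric even
`ℤ`-bilinear form on the coroot lattice `Q`, i.e. an element of `NS(R)`. -/
def IsNSForm {V : Type*} [AddCommGroup V] [Module ℚ V]
    (W : Subgroup (V ≃ₗ[ℚ] V)) (Q : AddSubgroup V)
    (b : V →ₗ[ℚ] V →ₗ[ℚ] ℚ) : Prop :=
  (∀ x y : V, b x y = b y x) ∧
  (∀ w ∈ W, ∀ x y : V, b (w x) (w y) = b x y) ∧
  (∀ x ∈ Q, ∀ y ∈ Q, ∃ n : ℤ, b x y = (n : ℚ)) ∧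
  (∀ x ∈ Q, ∃ n : ℤ, b x x = 2 * (n : ℚ))

lemma aux_nat_shift {ι : Type*} (s : Finset ι) (a b : ι → ℚ)
    (h : ∀ i ∈ s, b i = 0 → a i ≠ 0) :
    ∃ N : ℕ, ∀ i ∈ s, a i + (N : ℚ) * b i ≠ 0 := by
  obtain ⟨N, hN⟩ := exists_nat_gt (∑ i ∈ s, |a i| / |b i|)
  refine ⟨N, fun i hi => ?_⟩
  by_cases hb : b i = 0
  · simpa [hb] using h i hi hb
  · have h1 : |a i| / |b i| ≤ ∑ j ∈ s, |a j| / |b j| :=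
      Finset.single_le_sum (f := fun j => |a j| / |b j|) (fun j _ => by positivity) hi
    have h2 : |a i| / |b i| < (N : ℚ) := lt_of_le_of_lt h1 hN
    have h3 : |a i| < (N : ℚ) * |b i| := (div_lt_iff₀ (abs_pos.mpr hb)).mp h2
    intro hc
    have he : (N : ℚ) * b i = -a i := by linarith
    have : |(N : ℚ) * b i| = |a i| := by rw [he, abs_neg]
    rw [abs_mul, Nat.abs_cast] at this
    linarith

theorem ns_contraction_injective_for_some_lift'
    (V : Type*) [AddCommGroup V] [Module ℚ V] [FiniteDimensional ℚ V]
    (ι : Type*) [Fintype ι]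
    (root : ι → (V →ₗ[ℚ] ℚ)) (coroot : ι → V)
    (hpair : ∀ i, root i (coroot i) = 2)
    (hcrys : ∀ i j, ∃ n : ℤ, root i (coroot j) = (n : ℚ))
    (hspan : Submodule.span ℚ (Set.range coroot) = ⊤)
    (W : Subgroup (V ≃ₗ[ℚ] V))
    (hW : W = Subgroup.closure (Set.range fun i => Module.reflection (hpair i)))
    (Q : AddSubgroup V)
    (hQ : Q = AddSubgroup.closure (Set.range coroot)) :
    ∀ δ₀ : V, (∀ i, ∃ n : ℤ, root i δ₀ = (n : ℚ)) →
      ∃ δ : V, (∀ i, ∃ n : ℤ, root i δ = (n : ℚ)) ∧ δ - δ₀ ∈ Q ∧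
        ∀ b b' : V →ₗ[ℚ] V →ₗ[ℚ] ℚ,
          (∀ w ∈ W, ∀ x y : V, b (w x) (w y) = b x y) →
          (∀ w ∈ W, ∀ x y : V, b' (w x) (w y) = b' x y) →
          (∀ l ∈ Q, b δ l = b' δ l) → b = b' := by
  intro δ₀ hδ₀
  classical
  -- coroots lie in Q
  have hco_mem : ∀ i, coroot i ∈ Q := fun i => hQ ▸ AddSubgroup.subset_closure ⟨i, rfl⟩
  -- roots are integral on Q
  have hint : ∀ i, ∀ y ∈ Q, ∃ n : ℤ, root i y = (n : ℚ) := by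
    intro i y hy
    rw [hQ] at hy
    induction hy using AddSubgroup.closure_induction with
    | mem z hz => obtain ⟨k, rfl⟩ := hz; exact hcrys i k
    | zero => exact ⟨0, by simp⟩
    | add u v hu hv ihu ihv =>
        obtain ⟨m, hm⟩ := ihu; obtain ⟨n, hn⟩ := ihv
        exact ⟨m + n, by rw [map_add, hm, hn]; push_cast; ring⟩
    | neg u hu ihu =>
        obtain ⟨m, hm⟩ := ihu
        exact ⟨-m, by rw [map_neg, hm]; push_cast; ring⟩
  -- Step 1: find x with all root values nonzero
  have hx : ∀ s : Finset ι, ∃ x : V, ∀ i ∈ s, root i x ≠ 0 := by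
    intro s
    induction s using Finset.induction_on with
    | empty => exact ⟨0, by simp⟩
    | @insert j s hj ih =>
        obtain ⟨x, hx⟩ := ih
        have hcond : ∀ i ∈ insert j s, root i (coroot j) = 0 → root i x ≠ 0 := by
          intro i hi hbz
          rcases Finset.mem_insert.mp hi with rfl | his
          · rw [hpair i] at hbz; norm_num at hbz
          · exact hx i his
        obtain ⟨N, hN⟩ := aux_nat_shift (insert j s)
          (fun i => root i x) (fun i => root i (coroot j)) hcond
        refine ⟨x + (N : ℚ) • coroot j, fun i hi => ?_⟩
        simpa [map_add, map_smul, smul_eq_mul] using hN i hi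
  obtain ⟨x, hxs⟩ := hx Finset.univ
  -- Step 2: scale x into Q
  have hxmem : x ∈ Submodule.span ℚ (Set.range coroot) := hspan ▸ Submodule.mem_top
  obtain ⟨c, hc⟩ := Submodule.mem_span_range_iff_exists_fun ℚ |>.mp hxmem
  set d : ℕ := ∏ j, (c j).den with hd
  have hd0 : (0 : ℚ) < (d : ℚ) := by
    have : 0 < d := Finset.prod_pos (fun j _ => (c j).pos)
    exact_mod_cast this
  have hdc : ∀ i, ∃ m : ℤ, (d : ℚ) * c i = (m : ℚ) := by
    intro i
    obtain ⟨k, hk⟩ := Finset.dvd_prod_of_mem (fun j => (c j).den) (Finset.mem_univ i)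
    refine ⟨(c i).num * k, ?_⟩
    rw [← hd] at hk
    rw [hk]
    push_cast
    rw [mul_comm ((c i).den : ℚ) (k : ℚ), mul_assoc, mul_comm ((c i).den : ℚ) (c i),
      Rat.mul_den_eq_num]
    ring
  set x' : V := (d : ℚ) • x with hx'
  have hx'mem : x' ∈ Q := by
    choose m hm using hdc
    have : x' = ∑ i, (m i) • coroot i := by
      rw [hx', ← hc, Finset.smul_sum]
      refine Finset.sum_congr rfl fun i _ => ?_
      rw [smul_smul, hm i, Int.cast_smul_eq_zsmul ℚ]
    rw [this]
    exact AddSubgroup.sum_mem Q fun i _ => AddSubgroup.zsmul_mem Q (hco_mem i) (m i)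
  have hx'ne : ∀ i, root i x' ≠ 0 := by
    intro i
    rw [hx', map_smul, smul_eq_mul]
    exact mul_ne_zero (ne_of_gt hd0) (hxs i (Finset.mem_univ i))
  -- Step 3: shift δ₀
  obtain ⟨N, hN⟩ := aux_nat_shift Finset.univ (fun i => root i δ₀) (fun i => root i x')
    (fun i _ hbz => absurd hbz (hx'ne i))
  set δ : V := δ₀ + (N : ℚ) • x' with hδ
  have hδval : ∀ i, root i δ = root i δ₀ + (N : ℚ) * root i x' := by
    intro i; rw [hδ, map_add, map_smul, smul_eq_mul]
  have hδne : ∀ i, root i δ ≠ 0 := by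
    intro i; rw [hδval i]; exact hN i (Finset.mem_univ i)
  refine ⟨δ, ?_, ?_, ?_⟩
  · intro i
    obtain ⟨n₀, hn₀⟩ := hδ₀ i
    obtain ⟨m, hm⟩ := hint i x' hx'mem
    exact ⟨n₀ + N * m, by rw [hδval i, hn₀, hm]; push_cast; ring⟩
  · rw [hδ]
    simp only [add_sub_cancel_left]
    rw [show (N : ℚ) • x' = N • x' from Nat.cast_smul_eq_nsmul ℚ N x']
    exact AddSubgroup.nsmul_mem Q hx'mem N
  · intro b b' hbW hb'W hagree
    have hrefl_mem : ∀ i, (Module.reflection (hpair i)) ∈ W := by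
      intro i; rw [hW]; exact Subgroup.subset_closure ⟨i, rfl⟩
    have keyA : ∀ (f : V →ₗ[ℚ] V →ₗ[ℚ] ℚ),
        (∀ w ∈ W, ∀ x y : V, f (w x) (w y) = f x y) → ∀ i (z : V),
        2 * f z (coroot i) = root i z * f (coroot i) (coroot i) := by
      intro f hf i z
      have hinv := hf _ (hrefl_mem i) z (coroot i)
      rw [Module.reflection_apply, Module.reflection_apply_self] at hinv
      simp only [map_sub, map_smul, map_neg, LinearMap.sub_apply, LinearMap.smul_apply,
        LinearMap.neg_apply, smul_eq_mul] at hinv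
      linarith
    have hcc : ∀ i, b (coroot i) (coroot i) = b' (coroot i) (coroot i) := by
      intro i
      have h1 := keyA b hbW i δ
      have h2 := keyA b' hb'W i δ
      have h3 := hagree (coroot i) (hco_mem i)
      rw [h3] at h1
      have h4 : root i δ * b (coroot i) (coroot i)
          = root i δ * b' (coroot i) (coroot i) := by linarith
      exact mul_left_cancel₀ (hδne i) h4
    apply LinearMap.ext; intro z
    apply LinearMap.ext_on hspan
    rintro _ ⟨i, rfl⟩
    have h1 := keyA b hbW i z
    have h2 := keyA b' hb'W i z
    rw [hcc i] at h1
    linarith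


/-- Every coset of `Q` (the coroot lattice) in `P∨` (the coweight lattice)
admits a representative `δ ∈ P∨` such that the homomorphism
`NS(R) → Hom(Q, ℤ)`, `b ↦ (λ ↦ b(δ, λ))`, is injective. -/
theorem ns_contraction_injective_for_some_lift
    (V : Type*) [AddCommGroup V] [Module ℚ V] [FiniteDimensional ℚ V]
    (ι : Type*) [Fintype ι]
    (root : ι → (V →ₗ[ℚ] ℚ)) (coroot : ι → V)
    (hpair : ∀ i, root i (coroot i) = 2)
    (hcrys : ∀ i j, ∃ n : ℤ, root i (coroot j) = (n : ℚ))
    (hreduced : ∀ i j, (∃ c : ℚ, root j = c • root i) →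
      root j = root i ∨ root j = -root i)
    (hrefl_co : ∀ i j, ∃ k, Module.reflection (hpair i) (coroot j) = coroot k)
    (hrefl_root : ∀ i j, ∃ k, ∀ x : V,
      root j (Module.reflection (hpair i) x) = root k x)
    (hspan : Submodule.span ℚ (Set.range coroot) = ⊤)
    (W : Subgroup (V ≃ₗ[ℚ] V))
    (hW : W = Subgroup.closure (Set.range fun i => Module.reflection (hpair i)))
    (Q : AddSubgroup V)
    (hQ : Q = AddSubgroup.closure (Set.range coroot)) :
    ∀ δ₀ : V, (∀ i, ∃ n : ℤ, root i δ₀ = (n : ℚ)) →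
      ∃ δ : V, (∀ i, ∃ n : ℤ, root i δ = (n : ℚ)) ∧ δ - δ₀ ∈ Q ∧
        ∀ b b' : V →ₗ[ℚ] V →ₗ[ℚ] ℚ, IsNSForm W Q b → IsNSForm W Q b' →
          (∀ l ∈ Q, b δ l = b' δ l) → b = b' := by
  intro δ₀ hδ₀
  obtain ⟨δ, h1, h2, h3⟩ := ns_contraction_injective_for_some_lift' V ι root coroot
    hpair hcrys hspan W hW Q hQ δ₀ hδ₀
  exact ⟨δ, h1, h2, fun b b' hb hb' hagree => h3 b b' hb.2.1 hb'.2.1 hagree⟩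
end

section
/- Let b ∈ NS(R), let l_Z : Λ_Z → ℤ be a homomorphism, and let δ̄, δ̄′ ∈ P∨ with δ̄ − δ̄′ ∈ Q∨. If the homomorphism l_Z ⊕ b(−δ̄ ⊗ _) : Λ_Z ⊕ Q∨ → ℤ extends to a ℤ-linear map Λ → ℤ, then the homomorphism l_Z ⊕ b(−δ̄′ ⊗ _) : Λ_Z ⊕ Q∨ → ℤ also extends to a ℤ-linear map Λ → ℤ. (This is the paper's Lemma that condition (1) in the definition of the Néron–Severi group NS(M_G^d) of a reductive group G holds for every lift δ̄ of d̄ ∈ π₁(Ḡ) as soon as it holds for one lift.) -/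
/-- Let `b ∈ NS(R)`, `lZ : Λ_Z → ℤ`, and `δ, δ' ∈ P∨` with `δ - δ' ∈ Q`.
If `lZ ⊕ b(-δ ⊗ _) : Λ_Z ⊕ Q → ℤ` extends to a `ℤ`-linear map `Λ → ℤ`,
then so does `lZ ⊕ b(-δ' ⊗ _)`.  Here `Λ ⊆ U ⊕ V` contains `Λ_Z ⊕ Q` with
finite index and projects into `P∨` on the `V`-factor. -/
theorem ns_condition_independent_of_lift
    (V : Type*) [AddCommGroup V] [Module ℚ V] [FiniteDimensional ℚ V]
    (ι : Type*) [Fintype ι]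
    (root : ι → (V →ₗ[ℚ] ℚ)) (coroot : ι → V)
    (hpair : ∀ i, root i (coroot i) = 2)
    (hcrys : ∀ i j, ∃ n : ℤ, root i (coroot j) = (n : ℚ))
    (hreduced : ∀ i j, (∃ c : ℚ, root j = c • root i) →
      root j = root i ∨ root j = -root i)
    (hrefl_co : ∀ i j, ∃ k, Module.reflection (hpair i) (coroot j) = coroot k)
    (hrefl_root : ∀ i j, ∃ k, ∀ x : V,
      root j (Module.reflection (hpair i) x) = root k x)
    (hspan : Submodule.span ℚ (Set.range coroot) = ⊤)
    (W : Subgroup (V ≃ₗ[ℚ] V))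
    (hW : W = Subgroup.closure (Set.range fun i => Module.reflection (hpair i)))
    (Q : AddSubgroup V)
    (hQ : Q = AddSubgroup.closure (Set.range coroot))
    -- the lattices `Λ_Z ⊆ U` and `Λ_Z ⊕ Q ⊆ Λ ⊆ U ⊕ V`
    (U : Type*) [AddCommGroup U] [Module ℚ U] [FiniteDimensional ℚ U]
    (ΛZ : AddSubgroup U) (hΛZfg : ΛZ.FG)
    (Λ : AddSubgroup (U × V))
    (hsub : ΛZ.prod Q ≤ Λ)
    (hfin : ((ΛZ.prod Q).addSubgroupOf Λ).FiniteIndex)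
    (hproj : ∀ x ∈ Λ, ∀ i, ∃ n : ℤ, root i (Prod.snd x) = (n : ℚ))
    -- the data
    (b : V →ₗ[ℚ] V →ₗ[ℚ] ℚ) (hb : IsNSForm W Q b)
    (lZ : ΛZ →+ ℤ)
    (δ δ' : V)
    (hδ : ∀ i, ∃ n : ℤ, root i δ = (n : ℚ))
    (hδ' : ∀ i, ∃ n : ℤ, root i δ' = (n : ℚ))
    (hdiff : δ - δ' ∈ Q)
    (hext : ∃ L : Λ →+ ℤ, ∀ (x : Λ) (hz : (x : U × V).1 ∈ ΛZ),
      (x : U × V).2 ∈ Q →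
        ((L x : ℤ) : ℚ) = ((lZ ⟨(x : U × V).1, hz⟩ : ℤ) : ℚ) + b (-δ) (x : U × V).2) :
    ∃ L : Λ →+ ℤ, ∀ (x : Λ) (hz : (x : U × V).1 ∈ ΛZ),
      (x : U × V).2 ∈ Q →
        ((L x : ℤ) : ℚ) = ((lZ ⟨(x : U × V).1, hz⟩ : ℤ) : ℚ) + b (-δ') (x : U × V).2 := by
  obtain ⟨L, hL⟩ := hext
  obtain ⟨hsymm, hinv, hZ, heven⟩ := hb
  -- integrality: b x y ∈ ℤ for x with integer root values and y ∈ Q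
  have key : ∀ x : V, (∀ i, ∃ n : ℤ, root i x = (n : ℚ)) →
      ∀ y ∈ Q, ∃ n : ℤ, b x y = (n : ℚ) := by
    intro x hx y hy
    rw [hQ] at hy
    induction hy using AddSubgroup.closure_induction with
    | mem y hy =>
      obtain ⟨i, rfl⟩ := hy
      obtain ⟨m, hm⟩ := hx i
      obtain ⟨n, hn⟩ := heven (coroot i)
        (by rw [hQ]; exact AddSubgroup.subset_closure ⟨i, rfl⟩)
      refine ⟨m * n, ?_⟩
      have hw : (Module.reflection (hpair i) : V ≃ₗ[ℚ] V) ∈ W := by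
        rw [hW]; exact Subgroup.subset_closure ⟨i, rfl⟩
      have h1 := hinv _ hw x (coroot i)
      rw [Module.reflection_apply_self, Module.reflection_apply, map_neg,
        map_sub, map_smul] at h1
      simp only [LinearMap.sub_apply, LinearMap.smul_apply, smul_eq_mul,
        LinearMap.neg_apply] at h1
      have h2 : 2 * b x (coroot i) = root i x * b (coroot i) (coroot i) := by
        linarith
      rw [hm, hn] at h2
      push_cast
      linarith
    | zero => exact ⟨0, by simp⟩
    | add a c _ _ ha hc =>
      obtain ⟨m, hm⟩ := ha
      obtain ⟨n, hn⟩ := hc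
      exact ⟨m + n, by rw [map_add, hm, hn]; push_cast; ring⟩
    | neg a _ ha =>
      obtain ⟨m, hm⟩ := ha
      exact ⟨-m, by rw [map_neg, hm]; push_cast; ring⟩
  have hint : ∀ x : Λ, ∃ n : ℤ, b (δ - δ') (x : U × V).2 = (n : ℚ) := by
    intro x
    obtain ⟨n, hn⟩ := key (x : U × V).2 (fun i => hproj x x.2 i) (δ - δ') hdiff
    exact ⟨n, by rw [hsymm]; exact hn⟩
  choose g hg using hint
  have gadd : ∀ x y : Λ, g (x + y) = g x + g y := by
    intro x y
    have h := hg (x + y)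
    have hx := hg x
    have hy := hg y
    have : (((x + y : Λ) : U × V)).2 = (x : U × V).2 + (y : U × V).2 := rfl
    rw [this, map_add, hx, hy] at h
    exact_mod_cast h.symm
  refine ⟨AddMonoidHom.mk' (fun x => L x + g x)
    (fun x y => by
      show L (x + y) + g (x + y) = (L x + g x) + (L y + g y)
      rw [map_add, gadd]; ring), ?_⟩
  intro x hz hq
  simp only [AddMonoidHom.mk'_apply]
  push_cast
  rw [hL x hz hq, ← hg x]
  have h3 : (-δ' : V) = -δ + (δ - δ') := by abel
  rw [h3, map_add, LinearMap.add_apply]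
  ring
end

section
/- Let b ∈ NS(R) and let δ̄ ∈ pr_V(Λ) ⊆ P∨. Then the following are equivalent: (a) there exists a homomorphism l_Z : Λ_Z → ℤ such that l_Z ⊕ b(−δ̄ ⊗ _) : Λ_Z ⊕ Q∨ → ℤ extends to a ℤ-linear map Λ → ℤ; (b) b(δ̄, λ) ∈ ℤ for every λ ∈ Λ ∩ V. (This is the combinatorial content, for genus g_C = 0, of the paper's Proposition describing the image of the projection NS(M_G^d) → NS(M_{G̃}): a form b lies in the image if and only if it is integral on (ℤδ̄) ⊗ Λ_{T_{G'}}, where Λ_{T_{G'}} = Λ ∩ V.) -/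
/-- Let `b ∈ NS(R)` and `δ ∈ pr_V(Λ) ⊆ P∨`.  The following are equivalent:
(a) there is a homomorphism `lZ : Λ_Z → ℤ` such that `lZ ⊕ b(-δ ⊗ _)` extends
to a `ℤ`-linear map `Λ → ℤ`; (b) `b(δ, λ) ∈ ℤ` for every `λ ∈ Λ ∩ V`. -/
theorem ns_extension_iff_integral_on_lift
    (V : Type*) [AddCommGroup V] [Module ℚ V] [FiniteDimensional ℚ V]
    (ι : Type*) [Fintype ι]
    (root : ι → (V →ₗ[ℚ] ℚ)) (coroot : ι → V)
    (hpair : ∀ i, root i (coroot i) = 2)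
    (hcrys : ∀ i j, ∃ n : ℤ, root i (coroot j) = (n : ℚ))
    (hreduced : ∀ i j, (∃ c : ℚ, root j = c • root i) →
      root j = root i ∨ root j = -root i)
    (hrefl_co : ∀ i j, ∃ k, Module.reflection (hpair i) (coroot j) = coroot k)
    (hrefl_root : ∀ i j, ∃ k, ∀ x : V,
      root j (Module.reflection (hpair i) x) = root k x)
    (hspan : Submodule.span ℚ (Set.range coroot) = ⊤)
    (W : Subgroup (V ≃ₗ[ℚ] V))
    (hW : W = Subgroup.closure (Set.range fun i => Module.reflection (hpair i)))
    (Q : AddSubgroup V)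
    (hQ : Q = AddSubgroup.closure (Set.range coroot))
    -- the lattices `Λ_Z ⊆ U` and `Λ_Z ⊕ Q ⊆ Λ ⊆ U ⊕ V`
    (U : Type*) [AddCommGroup U] [Module ℚ U] [FiniteDimensional ℚ U]
    (ΛZ : AddSubgroup U) (hΛZfg : ΛZ.FG)
    (Λ : AddSubgroup (U × V))
    (hsub : ΛZ.prod Q ≤ Λ)
    (hfin : ((ΛZ.prod Q).addSubgroupOf Λ).FiniteIndex)
    (hproj : ∀ x ∈ Λ, ∀ i, ∃ n : ℤ, root i (Prod.snd x) = (n : ℚ))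
    -- the data
    (b : V →ₗ[ℚ] V →ₗ[ℚ] ℚ) (hb : IsNSForm W Q b)
    (δ : V) (hδ : ∃ u : U, (u, δ) ∈ Λ) :
    (∃ lZ : ΛZ →+ ℤ, ∃ L : Λ →+ ℤ, ∀ (x : Λ) (hz : (x : U × V).1 ∈ ΛZ),
        (x : U × V).2 ∈ Q →
          ((L x : ℤ) : ℚ) = ((lZ ⟨(x : U × V).1, hz⟩ : ℤ) : ℚ) + b (-δ) (x : U × V).2)
    ↔ (∀ x ∈ Λ, Prod.fst x = 0 → ∃ n : ℤ, b δ (Prod.snd x) = (n : ℚ)) := by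
  classical
  set n : ℕ := ((ΛZ.prod Q).addSubgroupOf Λ).index with hn_def
  have hn0 : n ≠ 0 := hfin.index_ne_zero
  have hnQ : (n : ℚ) ≠ 0 := by exact_mod_cast hn0
  have hsmul : ∀ x : Λ, ((n • x : Λ) : U × V) ∈ ΛZ.prod Q := fun x =>
    (AddSubgroup.mem_addSubgroupOf).1 (AddSubgroup.nsmul_index_mem _ x)
  constructor
  · rintro ⟨lZ, L, hL⟩ x hx hx1
    set x' : Λ := ⟨x, hx⟩ with hx'
    have hc : ((n • x' : Λ) : U × V) = (0, n • x.2) := by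
      have : ((n • x' : Λ) : U × V) = n • x := rfl
      rw [this, Prod.smul_def, hx1, smul_zero]
    have hmem := hsmul x'
    have h1 : ((n • x' : Λ) : U × V).1 ∈ ΛZ := hmem.1
    have h2 : ((n • x' : Λ) : U × V).2 ∈ Q := hmem.2
    have key := hL (n • x') h1 h2
    have hz0 : (⟨((n • x' : Λ) : U × V).1, h1⟩ : ΛZ) = 0 := by
      apply Subtype.ext
      show ((n • x' : Λ) : U × V).1 = (0 : U)
      rw [hc]
    rw [hz0, map_zero] at key
    have hL' : ((L (n • x') : ℤ) : ℚ) = (n : ℚ) * ((L x' : ℤ) : ℚ) := by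
      rw [map_nsmul, nsmul_eq_mul]
      push_cast
      ring
    have hb' : b (-δ) ((n • x' : Λ) : U × V).2 = (n : ℚ) * (b (-δ) x.2) := by
      rw [hc]
      show b (-δ) (n • x.2) = (n : ℚ) * (b (-δ) x.2)
      rw [map_nsmul, nsmul_eq_mul]
    rw [hL', hb', Int.cast_zero, zero_add] at key
    refine ⟨-(L x'), ?_⟩
    have hcancel : ((L x' : ℤ) : ℚ) = b (-δ) x.2 := mul_left_cancel₀ hnQ key
    have hneg : b (-δ) x.2 = -(b δ x.2) := by
      rw [map_neg]
      rfl
    push_cast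
    rw [hneg] at hcancel
    linarith
  · intro hint
    -- the image of `Λ` in `U`, as a `ℤ`-submodule
    set ΛU : Submodule ℤ U := AddSubgroup.toIntSubmodule (Λ.map (AddMonoidHom.fst U V))
      with hΛU
    have hmemU : ∀ x : Λ, (x : U × V).1 ∈ ΛU := fun x =>
      AddSubgroup.mem_map.2 ⟨(x : U × V), x.2, rfl⟩
    -- `ΛU` is finitely generated: it is contained in `(1/n) ΛZ`
    have hTfg : (Submodule.map
        ((((n : ℚ)⁻¹ • LinearMap.id : U →ₗ[ℚ] U)).restrictScalars ℤ)
        (AddSubgroup.toIntSubmodule ΛZ)).FG := by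
      apply Submodule.FG.map
      rw [Submodule.fg_iff_addSubgroup_fg, AddSubgroup.toIntSubmodule_toAddSubgroup]
      exact hΛZfg
    have hle : ΛU ≤ Submodule.map
        ((((n : ℚ)⁻¹ • LinearMap.id : U →ₗ[ℚ] U)).restrictScalars ℤ)
        (AddSubgroup.toIntSubmodule ΛZ) := by
      intro u hu
      obtain ⟨x, hxΛ, hx1⟩ := AddSubgroup.mem_map.1 hu
      have := (hsmul ⟨x, hxΛ⟩).1
      refine ⟨n • x.1, this, ?_⟩
      simp only [LinearMap.restrictScalars_apply, LinearMap.smul_apply, LinearMap.id_coe,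
        id_eq]
      rw [← Nat.cast_smul_eq_nsmul ℚ n x.1, inv_smul_smul₀ hnQ]
      exact hx1
    haveI : Module.Finite ℤ ΛU := by
      haveI : Module.Finite ℤ (Submodule.map
          ((((n : ℚ)⁻¹ • LinearMap.id : U →ₗ[ℚ] U)).restrictScalars ℤ)
          (AddSubgroup.toIntSubmodule ΛZ)) := Module.Finite.iff_fg.2 hTfg
      exact Module.Finite.of_injective (Submodule.inclusion hle)
        (Submodule.inclusion_injective hle)
    haveI : Module.IsTorsionFree ℤ U := Module.isTorsionFree_iff_smul_eq_zero.2 fun n u h => by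
      rw [← Int.cast_smul_eq_zsmul ℚ] at h
      simpa using h
    -- hence free, hence projective; split the projection `Λ → ΛU`
    set φ : Λ →ₗ[ℤ] ΛU :=
      ({ toFun := fun x => ⟨(x : U × V).1, hmemU x⟩
         map_zero' := rfl
         map_add' := fun a c => rfl } : Λ →+ ΛU).toIntLinearMap with hφ
    have hφsurj : Function.Surjective φ := by
      rintro ⟨u, hu⟩
      obtain ⟨x, hxΛ, hx1⟩ := AddSubgroup.mem_map.1 hu
      exact ⟨⟨x, hxΛ⟩, Subtype.ext hx1⟩
    obtain ⟨σ, hσ⟩ := Module.projective_lifting_property φ LinearMap.id hφsurj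
    have hσ1 : ∀ u : ΛU, ((σ u : Λ) : U × V).1 = (u : U) := by
      intro u
      have : φ (σ u) = u := by
        have := LinearMap.ext_iff.1 hσ u
        simpa using this
      exact congrArg Subtype.val this
    -- the "vertical correction" map
    set ρ : Λ → Λ := fun x => x - σ (φ x) with hρ
    have hρ1 : ∀ x : Λ, ((ρ x : Λ) : U × V).1 = 0 := by
      intro x
      show ((x - σ (φ x) : Λ) : U × V).1 = 0
      rw [AddSubgroup.coe_sub]
      show (x : U × V).1 - ((σ (φ x) : Λ) : U × V).1 = 0
      rw [hσ1]
      exact sub_self _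
    have hρint : ∀ x : Λ, ∃ m : ℤ, b δ ((ρ x : Λ) : U × V).2 = (m : ℚ) := fun x =>
      hint _ (ρ x).2 (hρ1 x)
    have hρadd : ∀ x y : Λ, ρ (x + y) = ρ x + ρ y := by
      intro x y
      show x + y - σ (φ (x + y)) = (x - σ (φ x)) + (y - σ (φ y))
      rw [map_add, map_add]
      abel
    set Lf : Λ → ℤ := fun x => -⌊b δ ((ρ x : Λ) : U × V).2⌋ with hLf_def
    have hLf : ∀ x : Λ, ((Lf x : ℤ) : ℚ) = -(b δ ((ρ x : Λ) : U × V).2) := by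
      intro x
      obtain ⟨m, hm⟩ := hρint x
      simp [hLf_def, hm, Int.floor_intCast]
    set L : Λ →+ ℤ := AddMonoidHom.mk' Lf (by
      intro x y
      apply Int.cast_injective (α := ℚ)
      push_cast
      rw [hLf, hLf, hLf, hρadd]
      have hco : ((ρ x + ρ y : Λ) : U × V).2 = ((ρ x : Λ) : U × V).2
          + ((ρ y : Λ) : U × V).2 := rfl
      rw [hco, map_add]
      ring) with hL_def
    set e : ΛZ →+ Λ := AddMonoidHom.mk'
      (fun z => ⟨((z : U), 0), hsub (AddSubgroup.mem_prod.2 ⟨z.2, Q.zero_mem⟩)⟩)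
      (by
        intro a c
        apply Subtype.ext
        show (((a + c : ΛZ) : U), (0 : V)) = ((a : U), (0 : V)) + ((c : U), (0 : V))
        rw [Prod.mk_add_mk, add_zero]
        rfl) with he_def
    refine ⟨L.comp e, L, ?_⟩
    intro x hz hq
    set z : ΛZ := ⟨(x : U × V).1, hz⟩ with hz_def
    set y : Λ := x - e z with hy_def
    have hy1 : (y : U × V).1 = 0 := by
      show ((x - e z : Λ) : U × V).1 = 0
      rw [AddSubgroup.coe_sub]
      exact sub_self _
    have hy2 : (y : U × V).2 = (x : U × V).2 := by
      show ((x - e z : Λ) : U × V).2 = (x : U × V).2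
      rw [AddSubgroup.coe_sub]
      show (x : U × V).2 - (0 : V) = (x : U × V).2
      exact sub_zero _
    have hxsplit : x = e z + y := by rw [hy_def]; abel
    have hLy : ((L y : ℤ) : ℚ) = b (-δ) (x : U × V).2 := by
      have hφy : φ y = 0 := Subtype.ext hy1
      have hρy : ρ y = y := by
        show y - σ (φ y) = y
        rw [hφy, map_zero, sub_zero]
      have : ((L y : ℤ) : ℚ) = -(b δ ((ρ y : Λ) : U × V).2) := hLf y
      rw [hρy, hy2] at this
      rw [this, map_neg]
      rfl
    have hLx : L x = L (e z) + L y := by rw [hxsplit, map_add]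
    rw [hLx]
    push_cast
    rw [hLy]
    rfl
end
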